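/- arXiv:1906.09185 — 3 statements merged into one kernel-verified Lean document; each statement's English description precedes it below -/
import Mathlib

section
/- For every integer d ≥ 1 there is a tree T such that no d-degenerate graph G is Ramsey for T; equivalently, the edges of every d-degenerate graph can be coloured with two colours so that there is no monochromatic copy of T. -/
open SimpleGraph

/-- The maximum degree of `G` is at most `d`: every vertex has at most `d` neighbours. -/
def MaxDegLE {α : Type*} (G : SimpleGraph α) (d : ℕ) : Prop :=
  ∀ v, (G.neighborSet v).ncard ≤ d

/-- A closed walk `c` in `G` has a chord: an edge of `G` between two vertices of `c`
that is not an edge of `c`. -/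
def HasChord {α : Type*} (G : SimpleGraph α) {u : α} (c : G.Walk u u) : Prop :=
  ∃ x y, x ∈ c.support ∧ y ∈ c.support ∧ G.Adj x y ∧ s(x, y) ∉ c.edges

/-- A graph is chordal if every cycle of length at least 4 has a chord. -/
def IsChordal {α : Type*} (G : SimpleGraph α) : Prop :=
  ∀ (u : α) (c : G.Walk u u), c.IsCycle → 4 ≤ c.length → HasChord G c

/-- `G` has treewidth at most `w`: `G` is a subgraph of a chordal graph with no
clique on `w + 2` vertices. -/
def TreewidthLE {α : Type*} (G : SimpleGraph α) (w : ℕ) : Prop :=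
  ∃ G' : SimpleGraph α, G ≤ G' ∧ IsChordal G' ∧ G'.CliqueFree (w + 2)

/-- `G` contains a copy of `H` (a subgraph isomorphic to `H`). -/
def HasCopy {α β : Type*} (G : SimpleGraph α) (H : SimpleGraph β) : Prop :=
  ∃ f : β ↪ α, ∀ u v, H.Adj u v → G.Adj (f u) (f v)

/-- Under the edge-colouring `c` of `G`, there is a copy of `H` all of whose edges
get colour `col`. -/
def HasMonoCopy {α β : Type*} (G : SimpleGraph α) (c : Sym2 α → Bool)
    (H : SimpleGraph β) (col : Bool) : Prop :=
  ∃ f : β ↪ α, ∀ u v, H.Adj u v → G.Adj (f u) (f v) ∧ c s(f u, f v) = col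

/-- `G` is Ramsey for `H`: every 2-colouring of the edges of `G` contains a
monochromatic copy of `H`. -/
def IsRamsey {α β : Type*} (G : SimpleGraph α) (H : SimpleGraph β) : Prop :=
  ∀ c : Sym2 α → Bool, ∃ col : Bool, HasMonoCopy G c H col

/-- `G` is `d`-degenerate: every nonempty (induced) subgraph has a vertex of degree
at most `d`. -/
def Degenerate {α : Type*} (d : ℕ) (G : SimpleGraph α) : Prop :=
  ∀ s : Set α, s.Nonempty → ∃ v ∈ s, (G.neighborSet v ∩ s).ncard ≤ d

/-- The strong product `G ⊠ H`. -/
def strongProd {α β : Type*} (G : SimpleGraph α) (H : SimpleGraph β) :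
    SimpleGraph (α × β) where
  Adj a b := (a.1 = b.1 ∧ H.Adj a.2 b.2) ∨ (G.Adj a.1 b.1 ∧ a.2 = b.2) ∨
    (G.Adj a.1 b.1 ∧ H.Adj a.2 b.2)
  symm := by
    constructor
    rintro a b (⟨h1, h2⟩ | ⟨h1, h2⟩ | ⟨h1, h2⟩)
    · exact Or.inl ⟨h1.symm, h2.symm⟩
    · exact Or.inr (Or.inl ⟨h1.symm, h2.symm⟩)
    · exact Or.inr (Or.inr ⟨h1.symm, h2.symm⟩)
  loopless := by
    constructor
    rintro a (⟨_, h⟩ | ⟨h, _⟩ | ⟨h, _⟩)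
    · exact H.irrefl h
    · exact G.irrefl h
    · exact G.irrefl h

/-- The complete `d`-ary tree of height `h`: vertices are sequences over `Fin d`
of length at most `h` (the root is the empty sequence), and each vertex `l` of
length `< h` has the `d` children `a :: l`. -/
def completeAryTree (d h : ℕ) : SimpleGraph {l : List (Fin d) // l.length ≤ h} :=
  SimpleGraph.fromRel (fun v w => ∃ a : Fin d, w.val = a :: v.val)

/-! ### Auxiliary material -/

/-- A `Fintype` instance for lists of bounded length over a nonempty finite alphabet. -/
noncomputable def fintypeBoundedLists (k h : ℕ) :
    Fintype {l : List (Fin (k + 1)) // l.length ≤ h} :=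
  Fintype.ofInjective
    (fun l : {l : List (Fin (k + 1)) // l.length ≤ h} =>
      ((⟨l.val.length, Nat.lt_succ_of_le l.property⟩ : Fin (h + 1)),
        fun i : Fin h => l.val.getD i 0))
    (by
      rintro ⟨l, hl⟩ ⟨l', hl'⟩ hEq
      simp only [Prod.mk.injEq, Fin.mk.injEq] at hEq
      obtain ⟨hlen, hfun⟩ := hEq
      apply Subtype.ext
      apply List.ext_getElem hlen
      intro i h1 h2
      have h3 : l.getD i 0 = l'.getD i 0 := congrFun hfun ⟨i, lt_of_lt_of_le h1 hl⟩
      rw [List.getD_eq_getElem _ _ h1, List.getD_eq_getElem _ _ h2] at h3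
      exact h3)

/-- A graph equipped with a parent function decreasing a height function, whose
adjacency is exactly the parent relation, is a tree. -/
lemma isTree_of_parent {V : Type*} (G : SimpleGraph V) (r : V) (par : V → V) (ht : V → ℕ)
    (hadj : ∀ v, v ≠ r → G.Adj (par v) v)
    (hii : ∀ ⦃u v⦄, G.Adj u v → (u = par v ∧ v ≠ r) ∨ (v = par u ∧ u ≠ r))
    (hht : ∀ v, v ≠ r → ht (par v) < ht v) : G.IsTree := by
  classical
  have hreach : ∀ (n : ℕ) (v : V), ht v ≤ n → G.Reachable v r := by
    intro n
    induction n with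
    | zero =>
      intro v hv
      by_cases h : v = r
      · subst h; exact Reachable.refl _
      · exact absurd (hht v h) (by omega)
    | succ n ih =>
      intro v hv
      by_cases h : v = r
      · subst h; exact Reachable.refl _
      · exact ((hadj v h).symm.reachable).trans
          (ih (par v) (by have := hht v h; omega))
  have hup : ∀ (n : ℕ) (v : V), ht v ≤ n →
      ∃ q : G.Walk v r, ∀ e ∈ q.edges, ∃ x, x ≠ r ∧ e = s(x, par x) ∧ ht x ≤ ht v := by
    intro n
    induction n with
    | zero =>
      intro v hv
      by_cases h : v = r
      · subst h; exact ⟨Walk.nil, by simp⟩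
      · exact absurd (hht v h) (by omega)
    | succ n ih =>
      intro v hv
      by_cases h : v = r
      · subst h; exact ⟨Walk.nil, by simp⟩
      · obtain ⟨q', hq'⟩ := ih (par v) (by have := hht v h; omega)
        refine ⟨Walk.cons (hadj v h).symm q', ?_⟩
        intro e he
        rw [Walk.edges_cons] at he
        rcases List.mem_cons.mp he with he | he
        · exact ⟨v, h, he, le_rfl⟩
        · obtain ⟨x, hx1, hx2, hx3⟩ := hq' e he
          exact ⟨x, hx1, hx2, le_trans hx3 (le_of_lt (hht v h))⟩
  have hA : ∀ (n : ℕ) (w : V) (q : G.Walk w r), q.length ≤ n → w ≠ r → par w ∈ q.support := by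
    intro n
    induction n with
    | zero =>
      intro w q hq hw
      cases q with
      | nil => exact absurd rfl hw
      | cons h q' => simp [Walk.length_cons] at hq
    | succ n ih =>
      intro w q hq hw
      cases q with
      | nil => exact absurd rfl hw
      | @cons _ x _ h q' =>
        have hq'len : q'.length ≤ n := by
          have := hq; simp only [Walk.length_cons] at this; omega
        rcases hii h with ⟨h1, h2⟩ | ⟨h1, h2⟩
        · -- h1 : w = par x, h2 : x ≠ r
          have hwmem : w ∈ q'.support := by rw [h1]; exact ih x q' hq'len h2
          have hmem2 := ih w (q'.dropUntil w hwmem)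
            (le_trans (Walk.length_dropUntil_le q' hwmem) hq'len) hw
          rw [Walk.support_cons]
          exact List.mem_cons_of_mem _ (Walk.support_dropUntil_subset q' hwmem hmem2)
        · -- h1 : x = par w
          rw [Walk.support_cons]
          refine List.mem_cons_of_mem _ ?_
          rw [← h1]
          exact q'.start_mem_support
  have hA' : ∀ (n : ℕ) (w : V) (q : G.Walk w r), q.length ≤ n → w ≠ r →
      s(w, par w) ∈ q.edges := by
    intro n
    induction n with
    | zero =>
      intro w q hq hw
      cases q with
      | nil => exact absurd rfl hw
      | cons h q' => simp [Walk.length_cons] at hq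
    | succ n ih =>
      intro w q hq hw
      cases q with
      | nil => exact absurd rfl hw
      | @cons _ x _ h q' =>
        have hq'len : q'.length ≤ n := by
          have := hq; simp only [Walk.length_cons] at this; omega
        rcases hii h with ⟨h1, h2⟩ | ⟨h1, h2⟩
        · -- h1 : w = par x, h2 : x ≠ r
          have hwmem : w ∈ q'.support := by rw [h1]; exact hA n x q' hq'len h2
          have hedge := ih w (q'.dropUntil w hwmem)
            (le_trans (Walk.length_dropUntil_le q' hwmem) hq'len) hw
          rw [Walk.edges_cons]
          exact List.mem_cons_of_mem _ (Walk.edges_dropUntil_subset q' hwmem hedge)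
        · -- h1 : x = par w
          rw [Walk.edges_cons, ← h1]
          exact List.mem_cons_self
  constructor
  · haveI : Nonempty V := ⟨r⟩
    exact ⟨fun u v => (hreach (ht u) u le_rfl).trans (hreach (ht v) v le_rfl).symm⟩
  · rw [isAcyclic_iff_forall_adj_isBridge]
    intro u v huv
    rw [isBridge_iff_adj_and_forall_walk_mem_edges]
    refine fun p => ?_
    rcases hii huv with ⟨h1, h2⟩ | ⟨h1, h2⟩
    · -- h1 : u = par v, h2 : v ≠ r
      obtain ⟨qup, hqup⟩ := hup (ht u) u le_rfl
      have hW := hA' ((p.reverse.append qup).length) v (p.reverse.append qup) le_rfl h2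
      rw [Walk.edges_append] at hW
      rcases List.mem_append.mp hW with hmem | hmem
      · rw [Walk.edges_reverse] at hmem
        have hp : s(v, par v) ∈ p.edges := List.mem_reverse.mp hmem
        rw [← h1] at hp
        rw [Sym2.eq_swap]
        exact hp
      · exfalso
        obtain ⟨x, hx1, hx2, hx3⟩ := hqup _ hmem
        rw [Sym2.eq_iff] at hx2
        rcases hx2 with ⟨hv1, hv2⟩ | ⟨hv1, hv2⟩
        · -- v = x, par v = par x
          have c1 := hht v h2
          rw [← h1] at c1
          rw [← hv1] at hx3
          omega
        · -- v = par x, par v = x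
          have hxu : x = u := by rw [← hv2, ← h1]
          have hvpu : v = par u := by rw [hv1, hxu]
          have c1 := hht v h2
          rw [← h1] at c1
          have c2 := hht u (hxu ▸ hx1)
          rw [← hvpu] at c2
          omega
    · -- h1 : v = par u, h2 : u ≠ r
      obtain ⟨qup, hqup⟩ := hup (ht v) v le_rfl
      have hW := hA' ((p.append qup).length) u (p.append qup) le_rfl h2
      rw [Walk.edges_append] at hW
      rcases List.mem_append.mp hW with hmem | hmem
      · rw [← h1] at hmem
        exact hmem
      · exfalso
        obtain ⟨x, hx1, hx2, hx3⟩ := hqup _ hmem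
        rw [Sym2.eq_iff] at hx2
        rcases hx2 with ⟨hv1, hv2⟩ | ⟨hv1, hv2⟩
        · -- u = x, par u = par x
          have c1 := hht u h2
          rw [← h1] at c1
          rw [← hv1] at hx3
          omega
        · -- u = par x, par u = x
          have hxv : x = v := by rw [← hv2, ← h1]
          have hupv : u = par v := by rw [hv1, hxv]
          have c1 := hht u h2
          rw [← h1] at c1
          have c2 := hht v (hxv ▸ hx1)
          rw [← hupv] at c2
          omega

/-- The complete `(k+1)`-ary tree of height `h` is a tree. -/
lemma completeAryTree_isTree (k h : ℕ) : (completeAryTree k h).IsTree := by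
  refine isTree_of_parent _ ⟨[], by simp⟩
    (fun v => ⟨v.val.tail, by have := v.property; have := v.val.length_tail; omega⟩)
    (fun v => v.val.length) ?_ ?_ ?_
  · rintro ⟨l, hl⟩ hv
    cases l with
    | nil => exact absurd (Subtype.ext rfl) hv
    | cons a t =>
      simp only [completeAryTree, SimpleGraph.fromRel_adj]
      constructor
      · intro hEq
        have := congrArg (fun z => z.1.length) hEq
        simp at this
      · exact Or.inl ⟨a, rfl⟩
  · intro u v huv
    rw [completeAryTree, SimpleGraph.fromRel_adj] at huv
    obtain ⟨hne, hrel⟩ := huv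
    rcases hrel with ⟨a, ha⟩ | ⟨a, ha⟩
    · left
      constructor
      · apply Subtype.ext
        show u.val = v.val.tail
        rw [ha]
        rfl
      · intro hvr
        rw [hvr] at ha
        simp at ha
    · right
      constructor
      · apply Subtype.ext
        show v.val = u.val.tail
        rw [ha]
        rfl
      · intro hur
        rw [hur] at ha
        simp at ha
  · intro v hv
    have hne : v.val ≠ [] := by
      intro h
      exact hv (Subtype.ext h)
    have h1 := List.length_pos_iff.mpr hne
    show (v.val.tail).length < v.val.length
    rw [List.length_tail]
    omega

/-- From degeneracy we extract an injective rank function and a proper colouring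
with `d+1` colours such that every vertex has at most `d` neighbours of
smaller rank. -/
lemma exists_order_coloring {α : Type} [Fintype α] (d : ℕ) (G : SimpleGraph α)
    (hdeg : Degenerate d G) :
    ∃ (ρ : α → ℕ) (φ : α → Fin (d + 1)),
      Function.Injective ρ ∧ (∀ ⦃u v⦄, G.Adj u v → φ u ≠ φ v) ∧
      ∀ v, {u | G.Adj v u ∧ ρ u < ρ v}.ncard ≤ d := by
  classical
  have key : ∀ (n : ℕ) (s : Finset α), s.card ≤ n →
      ∃ (ρ : α → ℕ) (φ : α → Fin (d + 1)),
        Set.InjOn ρ ↑s ∧ (∀ u ∈ s, ∀ v ∈ s, G.Adj u v → φ u ≠ φ v) ∧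
        ∀ v ∈ s, (s.filter fun u => G.Adj v u ∧ ρ u < ρ v).card ≤ d := by
    intro n
    induction n with
    | zero =>
      intro s hs
      have hse : s = ∅ := Finset.card_eq_zero.mp (Nat.le_antisymm hs (Nat.zero_le _))
      subst hse
      refine ⟨fun _ => 0, fun _ => 0, ?_, ?_, ?_⟩
      · simp
      · intro u hu; simp at hu
      · intro v hv; simp at hv
    | succ n ih =>
      intro s hs
      rcases s.eq_empty_or_nonempty with hse | hne
      · subst hse
        refine ⟨fun _ => 0, fun _ => 0, ?_, ?_, ?_⟩
        · simp
        · intro u hu; simp at hu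
        · intro v hv; simp at hv
      · obtain ⟨v, hvs, hvdeg⟩ := hdeg ↑s (Finset.coe_nonempty.mpr hne)
        have hvs' : v ∈ s := hvs
        have hnbr : (s.filter fun u => G.Adj v u).card ≤ d := by
          have hset : (G.neighborSet v ∩ ↑s) = ↑(s.filter fun u => G.Adj v u) := by
            ext u
            simp [SimpleGraph.mem_neighborSet, and_comm]
          rw [hset, Set.ncard_coe_finset] at hvdeg
          exact hvdeg
        set t := s.erase v with hts
        have htsub : t ⊆ s := Finset.erase_subset v s
        have htcard : t.card ≤ n := by
          rw [hts, Finset.card_erase_of_mem hvs']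
          omega
        obtain ⟨ρ', φ', hinj', hprop', hdeg'⟩ := ih t htcard
        set M := t.sup ρ' with hM
        have hle : ∀ u ∈ t, ρ' u ≤ M := fun u hu => Finset.le_sup hu
        set ρ := Function.update ρ' v (M + 1) with hρdef
        have himg : ¬ (Finset.univ : Finset (Fin (d + 1))) ⊆
            (t.filter fun u => G.Adj v u).image φ' := by
          intro hsub
          have h1 := Finset.card_le_card hsub
          have h2 := Finset.card_image_le (s := t.filter fun u => G.Adj v u) (f := φ')
          have h3 : (t.filter fun u => G.Adj v u).card ≤ (s.filter fun u => G.Adj v u).card :=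
            Finset.card_le_card (Finset.filter_subset_filter _ htsub)
          rw [Finset.card_univ, Fintype.card_fin] at h1
          omega
        obtain ⟨b, -, hb⟩ := Finset.not_subset.mp himg
        set φ := Function.update φ' v b with hφdef
        have hmemt : ∀ u, u ∈ s → u ≠ v → u ∈ t := fun u hu hne' =>
          Finset.mem_erase.mpr ⟨hne', hu⟩
        have hnev : ∀ u ∈ t, u ≠ v := fun u hu => Finset.ne_of_mem_erase hu
        have hρt : ∀ u ∈ t, ρ u = ρ' u := fun u hu =>
          Function.update_of_ne (hnev u hu) _ _
        have hφt : ∀ u ∈ t, φ u = φ' u := fun u hu =>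
          Function.update_of_ne (hnev u hu) _ _
        have hρv : ρ v = M + 1 := Function.update_self _ _ _
        have hφv : φ v = b := Function.update_self _ _ _
        refine ⟨ρ, φ, ?_, ?_, ?_⟩
        · intro a ha b' hb' hab
          have ha' : a ∈ s := ha
          have hb'' : b' ∈ s := hb'
          by_cases hav : a = v <;> by_cases hbv : b' = v
          · rw [hav, hbv]
          · exfalso
            have h1 : ρ a = M + 1 := by rw [hav]; exact hρv
            have h2 : ρ b' = ρ' b' := hρt b' (hmemt b' hb'' hbv)
            have h3 : ρ' b' ≤ M := hle b' (hmemt b' hb'' hbv)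
            omega
          · exfalso
            have h1 : ρ b' = M + 1 := by rw [hbv]; exact hρv
            have h2 : ρ a = ρ' a := hρt a (hmemt a ha' hav)
            have h3 : ρ' a ≤ M := hle a (hmemt a ha' hav)
            omega
          · have hat := hmemt a ha' hav
            have hbt := hmemt b' hb'' hbv
            apply hinj' (Finset.mem_coe.mpr hat) (Finset.mem_coe.mpr hbt)
            rw [← hρt a hat, ← hρt b' hbt]
            exact hab
        · intro x hx y hy hxy
          by_cases hxv : x = v <;> by_cases hyv : y = v
          · exfalso
            rw [hxv, hyv] at hxy
            exact G.irrefl hxy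
          · have hyt := hmemt y hy hyv
            have hmem : φ' y ∈ (t.filter fun u => G.Adj v u).image φ' :=
              Finset.mem_image_of_mem _ (Finset.mem_filter.mpr ⟨hyt, by rwa [hxv] at hxy⟩)
            rw [hxv, hφv, hφt y hyt]
            intro hEq
            exact hb (hEq ▸ hmem)
          · have hxt := hmemt x hx hxv
            have hmem : φ' x ∈ (t.filter fun u => G.Adj v u).image φ' :=
              Finset.mem_image_of_mem _
                (Finset.mem_filter.mpr ⟨hxt, by have := hxy.symm; rwa [hyv] at this⟩)
            rw [hyv, hφv, hφt x hxt]
            intro hEq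
            exact hb (hEq.symm ▸ hmem)
          · have hxt := hmemt x hx hxv
            have hyt := hmemt y hy hyv
            rw [hφt x hxt, hφt y hyt]
            exact hprop' x hxt y hyt hxy
        · intro w hw
          by_cases hwv : w = v
          · subst hwv
            refine le_trans (Finset.card_le_card ?_) hnbr
            intro u hu
            rw [Finset.mem_filter] at hu ⊢
            exact ⟨hu.1, hu.2.1⟩
          · have hwt := hmemt w hw hwv
            have hsub : (s.filter fun u => G.Adj w u ∧ ρ u < ρ w) ⊆
                t.filter fun u => G.Adj w u ∧ ρ' u < ρ' w := by
              intro u hu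
              obtain ⟨hus, hadj, hlt⟩ := Finset.mem_filter.mp hu
              by_cases huv : u = v
              · exfalso
                rw [huv, hρv] at hlt
                have h2 : ρ w = ρ' w := hρt w hwt
                have h3 : ρ' w ≤ M := hle w hwt
                omega
              · have hut := hmemt u hus huv
                refine Finset.mem_filter.mpr ⟨hut, hadj, ?_⟩
                rw [← hρt u hut, ← hρt w hwt]
                exact hlt
            exact le_trans (Finset.card_le_card hsub) (hdeg' w hwt)
  obtain ⟨ρ, φ, hinj, hprop, hdeg2⟩ := key Finset.univ.card Finset.univ le_rfl
  refine ⟨ρ, φ, ?_, ?_, ?_⟩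
  · intro a b hab
    exact hinj (by simp) (by simp) hab
  · intro u v huv
    exact hprop u (Finset.mem_univ u) v (Finset.mem_univ v) huv
  · intro v
    have hsets : {u | G.Adj v u ∧ ρ u < ρ v}
        = ↑(Finset.univ.filter fun u => G.Adj v u ∧ ρ u < ρ v) := by
      ext u; simp
    rw [hsets, Set.ncard_coe_finset]
    exact hdeg2 v (Finset.mem_univ v)

/-- For every integer `d ≥ 1` there is a tree `T` such that no
`d`-degenerate graph `G` is Ramsey for `T`. -/
theorem statement2 (d : ℕ) (hd : 1 ≤ d) :
    ∃ (β : Type) (_ : Fintype β) (T : SimpleGraph β), T.IsTree ∧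
      ∀ (α : Type) [Fintype α] (G : SimpleGraph α),
        Degenerate d G → ¬ IsRamsey G T := by
  classical
  refine ⟨{l : List (Fin (d + 1)) // l.length ≤ d + 1}, fintypeBoundedLists d (d + 1),
    completeAryTree (d + 1) (d + 1), completeAryTree_isTree (d + 1) (d + 1), ?_⟩
  intro α _inst G hdeg hram
  obtain ⟨ρ, φ, hρinj, hφ, hback⟩ := exists_order_coloring d G hdeg
  have csymm : ∀ u v : α,
      (fun u v : α => if ρ u < ρ v then decide (φ u < φ v)
        else if ρ v < ρ u then decide (φ v < φ u) else true) u v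
      = (fun u v : α => if ρ u < ρ v then decide (φ u < φ v)
        else if ρ v < ρ u then decide (φ v < φ u) else true) v u := by
    intro u v
    rcases lt_trichotomy (ρ u) (ρ v) with h | h | h
    · simp only [if_pos h, if_neg (lt_asymm h)]
    · simp only [if_neg (by omega : ¬ ρ u < ρ v), if_neg (by omega : ¬ ρ v < ρ u)]
    · simp only [if_pos h, if_neg (lt_asymm h)]
  set c : Sym2 α → Bool := Sym2.lift ⟨fun u v : α =>
      if ρ u < ρ v then decide (φ u < φ v)
      else if ρ v < ρ u then decide (φ v < φ u) else true, csymm⟩ with hc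
  have hcval : ∀ x y : α, ρ x < ρ y → c s(x, y) = decide (φ x < φ y) := by
    intro x y h
    rw [hc, Sym2.lift_mk]
    simp only [if_pos h]
  obtain ⟨col, f, hf⟩ := hram c
  set χ : α → ℕ := fun x => if col = true then (φ x : ℕ) else d - (φ x : ℕ) with hχdef
  have hχle : ∀ x, χ x ≤ d := by
    intro x
    simp only [hχdef]
    by_cases hcolv : col = true
    · simp only [if_pos hcolv]
      exact Fin.is_le _
    · simp only [if_neg hcolv]
      exact Nat.sub_le _ _
  have step : ∀ w : {l : List (Fin (d + 1)) // l.length ≤ d + 1}, w.val.length < d + 1 →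
      ∃ w' : {l : List (Fin (d + 1)) // l.length ≤ d + 1},
        w'.val.length = w.val.length + 1 ∧ χ (f w) < χ (f w') := by
    intro w hw
    have hcl : ∀ a : Fin (d + 1), (a :: w.val).length ≤ d + 1 := by
      intro a; simp only [List.length_cons]; omega
    set child : Fin (d + 1) → {l : List (Fin (d + 1)) // l.length ≤ d + 1} :=
      fun a => ⟨a :: w.val, hcl a⟩ with hchilddef
    have hadjT : ∀ a, (completeAryTree (d + 1) (d + 1)).Adj w (child a) := by
      intro a
      rw [completeAryTree, SimpleGraph.fromRel_adj]
      constructor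
      · intro hEq
        have := congrArg (fun z => z.1.length) hEq
        simp [hchilddef] at this
      · exact Or.inl ⟨a, rfl⟩
    have hG : ∀ a, G.Adj (f w) (f (child a)) := fun a => (hf _ _ (hadjT a)).1
    have hcol2 : ∀ a, c s(f w, f (child a)) = col := fun a => (hf _ _ (hadjT a)).2
    have hchildne : ∀ a, child a ≠ w := by
      intro a hEq
      have := congrArg (fun z => z.1.length) hEq
      simp [hchilddef] at this
    have hex : ∃ a, ρ (f w) < ρ (f (child a)) := by
      by_contra hno
      push_neg at hno
      have hlt : ∀ a, ρ (f (child a)) < ρ (f w) := by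
        intro a
        refine lt_of_le_of_ne (hno a) ?_
        intro hEq
        exact hchildne a (f.injective (hρinj hEq))
      have hinj2 : Set.InjOn (fun a => f (child a)) Set.univ := by
        intro a _ a' _ hEq
        have h1 := f.injective hEq
        have h2 := congrArg (fun z => z.1) h1
        simpa [hchilddef] using h2
      have himgsub : (fun a => f (child a)) '' Set.univ
          ⊆ {u | G.Adj (f w) u ∧ ρ u < ρ (f w)} := by
        rintro _ ⟨a, -, rfl⟩
        exact ⟨hG a, hlt a⟩
      have hfin : {u | G.Adj (f w) u ∧ ρ u < ρ (f w)}.Finite := Set.toFinite _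
      have hc1 := Set.ncard_le_ncard himgsub hfin
      have hc2 : ((fun a => f (child a)) '' Set.univ).ncard
          = (Set.univ : Set (Fin (d + 1))).ncard := Set.ncard_image_of_injOn hinj2
      rw [Set.ncard_univ, Nat.card_eq_fintype_card, Fintype.card_fin] at hc2
      have := hback (f w)
      omega
    obtain ⟨a, ha⟩ := hex
    refine ⟨child a, by simp [hchilddef], ?_⟩
    have hcv := hcol2 a
    rw [hcval _ _ ha] at hcv
    simp only [hχdef]
    by_cases hcolv : col = true
    · rw [hcolv] at hcv
      have hφlt : φ (f w) < φ (f (child a)) := of_decide_eq_true hcv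
      simp only [if_pos hcolv]
      exact_mod_cast hφlt
    · have hcolf : col = false := by
        cases col
        · rfl
        · exact absurd rfl hcolv
      rw [hcolf] at hcv
      have hnlt : ¬ φ (f w) < φ (f (child a)) := of_decide_eq_false hcv
      have hne2 : φ (f w) ≠ φ (f (child a)) := hφ (hG a)
      have hφlt : φ (f (child a)) < φ (f w) := lt_of_le_of_ne (not_lt.mp hnlt) hne2.symm
      have hφlt' : (φ (f (child a)) : ℕ) < (φ (f w) : ℕ) := hφlt
      have hle1 : (φ (f w) : ℕ) ≤ d := Fin.is_le _
      simp only [if_neg hcolv]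
      omega
  have main : ∀ t : ℕ, t ≤ d + 1 →
      ∃ w : {l : List (Fin (d + 1)) // l.length ≤ d + 1}, w.val.length = t ∧ t ≤ χ (f w) := by
    intro t
    induction t with
    | zero => exact fun _ => ⟨⟨[], by simp⟩, rfl, Nat.zero_le _⟩
    | succ t ih =>
      intro ht
      obtain ⟨w, hwl, hwχ⟩ := ih (by omega)
      obtain ⟨w', hw'l, hw'χ⟩ := step w (by omega)
      exact ⟨w', by omega, by omega⟩
  obtain ⟨w, -, hwχ⟩ := main (d + 1) le_rfl
  have := hχle (f w)
  omega
end

section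
/- Fix integers n, d, k, m ≥ 1. Let T be a tree in 𝒯_{n,d} rooted at x₀, let T' be the truncation of T, and set s = (d + d²)k. Suppose G is a graph, (V₁, V₂, …, V_m) is a vertex partition of G, and ψ is a red/blue-colouring of the edges of G such that for every i ∈ [m] the induced subgraph G[V_i] is a complete graph all of whose edges are blue, and |V_i| ≥ s. If there is a blue copy of T' in the (G, ψ, s)-colouring of K_m, then there is a blue copy of T ⊠ K_k in G. -/
open SimpleGraph

/-- There is a complete bipartite graph `K_{s,s}` between `A` and `B` in `G` all of
whose edges are blue (`false`) under `ψ`. -/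
def BlueKss {γ : Type*} (G : SimpleGraph γ) (ψ : Sym2 γ → Bool) (s : ℕ)
    (A B : Finset γ) : Prop :=
  ∃ A' B' : Finset γ, A' ⊆ A ∧ B' ⊆ B ∧ A'.card = s ∧ B'.card = s ∧
    ∀ a ∈ A', ∀ b ∈ B', G.Adj a b ∧ ψ s(a, b) = false

/-- The truncation `T'` of a tree `T` rooted at `r`: its vertices are `r` together
with the vertices at odd distance from `r`, and `v, w` are adjacent iff one is the
grandparent of the other (the grandparent of a child of `r` being `r` itself). -/
def truncation {α : Type*} (T : SimpleGraph α) (r : α) :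
    SimpleGraph {v : α // v = r ∨ Odd (T.dist r v)} :=
  SimpleGraph.fromRel (fun v w =>
    (T.dist v.val w.val = 2 ∧ T.dist r w.val + 2 = T.dist r v.val) ∨
    (T.dist r v.val = 1 ∧ w.val = r))


variable {α : Type*} {G : SimpleGraph α}

lemma auxS7_dist_support_le {u v w : α} (p : G.Walk u v) (hw : w ∈ p.support) :
    G.dist u w ≤ p.length := by
  classical
  exact le_trans (dist_le (p.takeUntil w hw)) (p.length_takeUntil_le hw)

lemma auxS7_walk_rev_split {x r : α} (p : G.Walk x r) (h : p.length ≠ 0) :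
    ∃ (y : α) (q : G.Walk y r), G.Adj x y ∧ q.length + 1 = p.length := by
  cases p with
  | nil => simp at h
  | cons h' q => exact ⟨_, q, h', rfl⟩

lemma auxS7_exists_parent {r x : α} (hc : G.Connected) (h : G.dist r x ≠ 0) :
    ∃ y, G.Adj y x ∧ G.dist r y + 1 = G.dist r x := by
  obtain ⟨p, hp⟩ := hc.exists_walk_length_eq_dist r x
  obtain ⟨y, q, hadj, hq⟩ := auxS7_walk_rev_split p.reverse (by simpa [hp] using h)
  have h1 : G.dist r y ≤ q.length := by
    simpa using dist_le q.reverse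
  have h2 : G.dist r x ≤ G.dist r y + G.dist y x := hc.dist_triangle
  have h3 : G.dist y x ≤ 1 := dist_le (Walk.cons hadj.symm Walk.nil)
  have h4 : q.length + 1 = G.dist r x := by
    rwa [Walk.length_reverse, hp] at hq
  exact ⟨y, hadj.symm, by omega⟩

lemma auxS7_exists_spath (hc : G.Connected) (u v : α) :
    ∃ p : G.Walk u v, p.IsPath ∧ p.length = G.dist u v := by
  obtain ⟨p, hp⟩ := hc.exists_walk_length_eq_dist u v
  exact ⟨p, p.isPath_of_length_eq_dist hp, hp⟩

lemma auxS7_concat_isPath {r x y : α} {p : G.Walk r y} (hp : p.IsPath)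
    (h : G.Adj y x) (hx : x ∉ p.support) : (p.concat h).IsPath := by
  rw [← Walk.isPath_reverse_iff, Walk.reverse_concat]
  refine Walk.IsPath.cons hp.reverse ?_
  simpa [Walk.support_reverse] using hx

lemma auxS7_adj_dist_ne (hT : G.IsTree) (r : α) {x y : α} (h : G.Adj x y) :
    G.dist r x ≠ G.dist r y := by
  classical
  intro he
  obtain ⟨p, hp, hpl⟩ := auxS7_exists_spath hT.isConnected r x
  obtain ⟨q, hq, hql⟩ := auxS7_exists_spath hT.isConnected r y
  by_cases hy : y ∈ p.support
  · -- q is a strict prefix of p: contradiction with lengths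
    have htu : (p.takeUntil y hy).IsPath := hp.takeUntil hy
    have hequ : p.takeUntil y hy = q :=
      (hT.existsUnique_path r y).unique htu hq
    have hspec := p.take_spec hy
    have hlen : (p.takeUntil y hy).length + (p.dropUntil y hy).length = p.length := by
      rw [← Walk.length_append, hspec]
    have hdrop : (p.dropUntil y hy).length ≠ 0 := by
      intro h0
      exact h.ne (Walk.eq_of_length_eq_zero h0).symm
    have : q.length + 1 ≤ p.length := by
      rw [← hequ]; omega
    omega
  · have hc : (p.concat h).IsPath := auxS7_concat_isPath hp h hy
    have : p.concat h = q := (hT.existsUnique_path r y).unique hc hq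
    have := congrArg Walk.length this
    rw [Walk.length_concat] at this
    omega

lemma auxS7_parent_unique (hT : G.IsTree) {r x y y' : α}
    (h1 : G.Adj y x) (hd1 : G.dist r y + 1 = G.dist r x)
    (h2 : G.Adj y' x) (hd2 : G.dist r y' + 1 = G.dist r x) : y = y' := by
  classical
  obtain ⟨p, hp, hpl⟩ := auxS7_exists_spath hT.isConnected r y
  obtain ⟨q, hq, hql⟩ := auxS7_exists_spath hT.isConnected r y'
  have hxp : x ∉ p.support := by
    intro hx
    have := auxS7_dist_support_le p hx
    omega
  have hxq : x ∉ q.support := by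
    intro hx
    have := auxS7_dist_support_le q hx
    omega
  have hc1 : (p.concat h1).IsPath := auxS7_concat_isPath hp h1 hxp
  have hc2 : (q.concat h2).IsPath := auxS7_concat_isPath hq h2 hxq
  have heq : p.concat h1 = q.concat h2 :=
    (hT.existsUnique_path r x).unique hc1 hc2
  have := congrArg (fun w : G.Walk r x => w.reverse.getVert 1) heq
  simpa [Walk.reverse_concat, Walk.getVert_cons] using this

lemma auxS7_exists_blocks {α γ : Type*} [DecidableEq α] [DecidableEq γ]
    (k : ℕ) (host : α → Finset γ) :
    ∀ S : Finset α, (∀ x ∈ S, S.card * k ≤ (host x).card) →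
    ∃ b : α → Finset γ, ∀ x ∈ S, b x ⊆ host x ∧ (b x).card = k ∧
      ∀ y ∈ S, y ≠ x → Disjoint (b x) (b y) := by
  intro S
  induction S using Finset.induction with
  | empty => exact fun _ => ⟨fun _ => ∅, by simp⟩
  | @insert a S' ha ih =>
    intro hH
    obtain ⟨b, hb⟩ := ih (fun x hx => by
      have h1 := hH x (Finset.mem_insert_of_mem hx)
      have h2 : S'.card ≤ (insert a S').card := Finset.card_le_card (Finset.subset_insert a S')
      exact le_trans (Nat.mul_le_mul_right k h2) h1)
    have hbU : (S'.biUnion b).card ≤ S'.card * k := by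
      refine le_trans (Finset.card_biUnion_le) ?_
      calc ∑ y ∈ S', (b y).card ≤ ∑ y ∈ S', k :=
            Finset.sum_le_sum (fun y hy => le_of_eq (hb y hy).2.1)
        _ = S'.card * k := by rw [Finset.sum_const, smul_eq_mul]
    have hins : (insert a S').card = S'.card + 1 := Finset.card_insert_of_notMem ha
    have hka : k ≤ ((host a) \ S'.biUnion b).card := by
      have h1 := hH a (Finset.mem_insert_self a S')
      have h2 : (host a).card - (S'.biUnion b).card ≤ ((host a) \ S'.biUnion b).card :=
        Finset.le_card_sdiff _ _
      have hmul : (insert a S').card * k = S'.card * k + k := by rw [hins, Nat.succ_mul]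
      omega
    obtain ⟨c, hcsub, hccard⟩ := Finset.exists_subset_card_eq hka
    have hcdisj : ∀ y ∈ S', Disjoint c (b y) := by
      intro y hy
      rw [Finset.disjoint_left]
      intro e he hey
      exact (Finset.mem_sdiff.mp (hcsub he)).2 (Finset.mem_biUnion.mpr ⟨y, hy, hey⟩)
    refine ⟨Function.update b a c, ?_⟩
    intro x hx
    rcases Finset.mem_insert.mp hx with rfl | hx'
    · refine ⟨by simp only [Function.update_self]; exact hcsub.trans (Finset.sdiff_subset),
        by simp [Function.update_self, hccard], ?_⟩
      intro y hy hne
      have hy' : y ∈ S' := by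
        rcases Finset.mem_insert.mp hy with rfl | h; · exact absurd rfl hne
        · exact h
      rw [Function.update_self, Function.update_of_ne (by rintro rfl; exact ha hy')]
      exact hcdisj y hy'
    · have hxa : x ≠ a := by rintro rfl; exact ha hx'
      rw [Function.update_of_ne hxa]
      refine ⟨(hb x hx').1, (hb x hx').2.1, ?_⟩
      intro y hy hne
      rcases Finset.mem_insert.mp hy with rfl | hy'
      · rw [Function.update_self]
        exact (hcdisj x hx').symm
      · rw [Function.update_of_ne (by rintro rfl; exact ha hy')]
        exact (hb x hx').2.2 y hy' hne

/-- Let `T` be a tree with `n` vertices and maximum degree at most `d`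
rooted at `x₀`, let `T'` be its truncation and `s = (d + d²)k`. Let `G` be a graph
with a vertex partition `(V 1, …, V m)` and a red/blue edge-colouring `ψ`
(`false` = blue) such that each `G[V i]` is a complete graph all of whose edges
are blue and `|V i| ≥ s`. If there is a blue copy of `T'` in the `(G, ψ, s)`-colouring
of `K_m` (i.e. an embedding `g` of `T'` into `[m]` such that each edge of `T'` maps
to a pair `i j` with a blue `K_{s,s}` between `V i` and `V j`), then there is a blue
copy of `T ⊠ K_k` in `G`. -/
theorem statement7 (n d k m : ℕ) (hn : 1 ≤ n) (hd : 1 ≤ d) (hk : 1 ≤ k) (hm : 1 ≤ m)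
    {αT : Type} [Fintype αT] (T : SimpleGraph αT) (hT : T.IsTree)
    (hTn : Fintype.card αT = n) (hTd : MaxDegLE T d) (x₀ : αT)
    {γ : Type} [Fintype γ] (G : SimpleGraph γ) (ψ : Sym2 γ → Bool)
    (V : Fin m → Finset γ)
    (hpart : ∀ x : γ, ∃! i, x ∈ V i)
    (hsize : ∀ i, (d + d ^ 2) * k ≤ (V i).card)
    (hblue : ∀ i, ∀ u ∈ V i, ∀ v ∈ V i, u ≠ v → G.Adj u v ∧ ψ s(u, v) = false)
    (g : {v : αT // v = x₀ ∨ Odd (T.dist x₀ v)} ↪ Fin m)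
    (hg : ∀ v w, (truncation T x₀).Adj v w →
      BlueKss G ψ ((d + d ^ 2) * k) (V (g v)) (V (g w))) :
    HasMonoCopy G ψ (strongProd T (⊤ : SimpleGraph (Fin k))) false := by
  classical
  have conn := hT.isConnected
  have D0 : ∀ x : αT, T.dist x₀ x = 0 ↔ x = x₀ := by
    intro x
    rw [conn.dist_eq_zero_iff]
    exact eq_comm
  -- parent function
  have hparent : ∀ x : αT, ∃ y, T.dist x₀ x ≠ 0 →
      T.Adj y x ∧ T.dist x₀ y + 1 = T.dist x₀ x := by
    intro x
    by_cases h : T.dist x₀ x = 0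
    · exact ⟨x₀, fun h' => absurd h h'⟩
    · obtain ⟨y, hy⟩ := auxS7_exists_parent conn h
      exact ⟨y, fun _ => hy⟩
  choose par hpar using hparent
  have hne0 : ∀ x : αT, x ≠ x₀ → T.dist x₀ x ≠ 0 := fun x hx h0 => hx ((D0 x).1 h0)
  have hparU : ∀ x y : αT, T.Adj y x → T.dist x₀ y + 1 = T.dist x₀ x → y = par x := by
    intro x y hadj hdd
    have hx0 : T.dist x₀ x ≠ 0 := by omega
    exact auxS7_parent_unique hT hadj hdd (hpar x hx0).1 (hpar x hx0).2
  have hoddpar : ∀ x : αT, x ≠ x₀ → ¬ Odd (T.dist x₀ x) → Odd (T.dist x₀ (par x)) := by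
    intro x hx ho
    have hdd := (hpar x (hne0 x hx)).2
    have h0 := hne0 x hx
    rcases Nat.even_or_odd (T.dist x₀ x) with he | ho'
    · rw [Nat.even_iff] at he
      rw [Nat.odd_iff]
      omega
    · exact absurd ho' ho
  -- the root vertex of the truncation
  obtain ⟨root', hroot⟩ : ∃ u : {v : αT // v = x₀ ∨ Odd (T.dist x₀ v)}, u.val = x₀ :=
    ⟨⟨x₀, Or.inl rfl⟩, rfl⟩
  -- the truncation vertex corresponding to an odd vertex
  have hselx : ∀ x : αT, ∃ u : {v : αT // v = x₀ ∨ Odd (T.dist x₀ v)},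
      Odd (T.dist x₀ x) → u.val = x := by
    intro x
    by_cases h : Odd (T.dist x₀ x)
    · exact ⟨⟨x, Or.inr h⟩, fun _ => rfl⟩
    · exact ⟨root', fun ho => absurd ho h⟩
  choose sel hsel using hselx
  -- the grandparent truncation vertex of an odd vertex
  have hGP : ∀ x : αT, ∃ u : {v : αT // v = x₀ ∨ Odd (T.dist x₀ v)},
      Odd (T.dist x₀ x) →
        (truncation T x₀).Adj (sel x) u ∧
        (T.dist x₀ x = 1 → u.val = x₀) ∧
        (T.dist x₀ x ≠ 1 → u.val = par (par x) ∧
          T.dist x₀ u.val + 2 = T.dist x₀ x) := by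
    intro x
    by_cases hodd : Odd (T.dist x₀ x)
    swap
    · exact ⟨root', fun ho => absurd ho hodd⟩
    have hx : (sel x).val = x := hsel x hodd
    have hx0 : x ≠ x₀ := by
      intro he
      have h0 : T.dist x₀ x = 0 := (D0 x).2 he
      rw [h0] at hodd
      simp [Nat.odd_iff] at hodd
    obtain ⟨hp1a, hp1d⟩ := hpar x (hne0 x hx0)
    by_cases h1 : T.dist x₀ x = 1
    · refine ⟨root', fun _ => ⟨?_, fun _ => hroot, fun h => absurd h1 h⟩⟩
      simp only [truncation, SimpleGraph.fromRel_adj]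
      constructor
      · intro he
        have hv := congrArg Subtype.val he
        rw [hx, hroot] at hv
        exact hx0 hv
      · exact Or.inl (Or.inr ⟨by rw [hx]; exact h1, hroot⟩)
    · have hl3 : 3 ≤ T.dist x₀ x := by
        have := Nat.odd_iff.mp hodd
        omega
      have hp1ne : par x ≠ x₀ := by
        intro he
        have h0 : T.dist x₀ (par x) = 0 := (D0 _).2 he
        omega
      obtain ⟨hp2a, hp2d⟩ := hpar (par x) (hne0 _ hp1ne)
      have hodd2 : Odd (T.dist x₀ (par (par x))) := by
        rw [Nat.odd_iff] at hodd ⊢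
        omega
      refine ⟨⟨par (par x), Or.inr hodd2⟩, fun _ => ⟨?_, fun h => absurd h h1,
        fun _ => ⟨rfl, by
          have hgoal : T.dist x₀ (par (par x)) + 2 = T.dist x₀ x := by omega
          exact hgoal⟩⟩⟩
      simp only [truncation, SimpleGraph.fromRel_adj]
      refine ⟨?_, ?_⟩
      · intro he
        have hv := congrArg Subtype.val he
        rw [hx] at hv
        have hv' : x = par (par x) := hv
        have hv2 := congrArg (T.dist x₀) hv'
        omega
      · refine Or.inl (Or.inl ⟨?_, ?_⟩)
        · have hle : T.dist x (par (par x)) ≤ 2 :=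
            dist_le (Walk.cons hp1a.symm (Walk.cons hp2a.symm Walk.nil))
          have htr : T.dist x₀ x ≤ T.dist x₀ (par (par x)) + T.dist (par (par x)) x :=
            conn.dist_triangle
          have hcomm : T.dist (par (par x)) x = T.dist x (par (par x)) := dist_comm
          have hgoal : T.dist x (par (par x)) = 2 := by omega
          rw [hx]
          exact hgoal
        · have hgoal : T.dist x₀ (par (par x)) + 2 = T.dist x₀ x := by omega
          rw [hx]
          exact hgoal
  choose gp hgp using hGP
  -- the blue K_{s,s} sides
  have hABx : ∀ x : αT, ∃ A B : Finset γ, Odd (T.dist x₀ x) →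
      A ⊆ V (g (sel x)) ∧ B ⊆ V (g (gp x)) ∧
      A.card = (d + d ^ 2) * k ∧ B.card = (d + d ^ 2) * k ∧
      ∀ a ∈ A, ∀ b ∈ B, G.Adj a b ∧ ψ s(a, b) = false := by
    intro x
    by_cases hodd : Odd (T.dist x₀ x)
    · obtain ⟨A, B, h1, h2, h3, h4, h5⟩ := hg (sel x) (gp x) ((hgp x hodd).1)
      exact ⟨A, B, fun _ => ⟨h1, h2, h3, h4, h5⟩⟩
    · exact ⟨∅, ∅, fun ho => absurd ho hodd⟩
  choose A B hAB using hABx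
  -- anchors
  have hanchor : ∀ x : αT, ∃ u : {v : αT // v = x₀ ∨ Odd (T.dist x₀ v)},
      (x = x₀ → u = root') ∧
      (x ≠ x₀ → Odd (T.dist x₀ x) → u = gp x) ∧
      (x ≠ x₀ → ¬ Odd (T.dist x₀ x) → u = sel (par x)) := by
    intro x
    by_cases hx : x = x₀
    · exact ⟨root', fun _ => rfl, fun h _ => absurd hx h, fun h _ => absurd hx h⟩
    · by_cases hodd : Odd (T.dist x₀ x)
      · exact ⟨gp x, fun h => absurd h hx, fun _ _ => rfl, fun _ ho => absurd hodd ho⟩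
      · exact ⟨sel (par x), fun h => absurd h hx, fun _ ho => absurd ho hodd, fun _ _ => rfl⟩
  choose anchor hanc0 hancO hancE using hanchor
  -- host sets
  have hhostx : ∀ x : αT, ∃ h : Finset γ,
      (x = x₀ → h = V (g root')) ∧
      (x ≠ x₀ → Odd (T.dist x₀ x) → h = B x) ∧
      (x ≠ x₀ → ¬ Odd (T.dist x₀ x) → h = A (par x)) := by
    intro x
    by_cases hx : x = x₀
    · exact ⟨V (g root'), fun _ => rfl, fun h _ => absurd hx h, fun h _ => absurd hx h⟩
    · by_cases hodd : Odd (T.dist x₀ x)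
      · exact ⟨B x, fun h => absurd h hx, fun _ _ => rfl, fun _ ho => absurd hodd ho⟩
      · exact ⟨A (par x), fun h => absurd h hx, fun _ ho => absurd ho hodd, fun _ _ => rfl⟩
  choose host hh0 hhO hhE using hhostx
  have hhostV : ∀ x : αT, host x ⊆ V (g (anchor x)) := by
    intro x
    by_cases hx : x = x₀
    · rw [hh0 x hx, hanc0 x hx]
    · by_cases hodd : Odd (T.dist x₀ x)
      · rw [hhO x hx hodd, hancO x hx hodd]
        exact (hAB x hodd).2.1
      · rw [hhE x hx hodd, hancE x hx hodd]
        exact (hAB (par x) (hoddpar x hx hodd)).1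
  have hhostcard : ∀ x : αT, (d + d ^ 2) * k ≤ (host x).card := by
    intro x
    by_cases hx : x = x₀
    · rw [hh0 x hx]; exact hsize _
    · by_cases hodd : Odd (T.dist x₀ x)
      · rw [hhO x hx hodd]
        exact le_of_eq ((hAB x hodd).2.2.2.1).symm
      · rw [hhE x hx hodd]
        exact le_of_eq ((hAB (par x) (hoddpar x hx hodd)).2.2.1).symm
  -- degree bound
  have hdeg : ∀ v : αT, (T.neighborFinset v).card ≤ d := by
    intro v
    have h := hTd v
    rwa [Set.ncard_eq_toFinset_card', ← SimpleGraph.neighborFinset_def] at h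
  -- fibres of the anchor map are small
  have hone : 1 ≤ d ^ 2 := Nat.one_le_pow _ _ hd
  have hdd2 : d * d = d ^ 2 := (pow_two d).symm
  have hfib : ∀ t : {v : αT // v = x₀ ∨ Odd (T.dist x₀ v)},
      (Finset.univ.filter (fun x : αT => anchor x = t)).card ≤ d + d ^ 2 := by
    intro t
    by_cases ht : t.val = x₀
    · refine le_trans (Finset.card_le_card (fun x hxmem => ?_))
        (le_trans (Finset.card_insert_le x₀ (T.neighborFinset x₀)) (by have := hdeg x₀; omega))
      have hax : anchor x = t := (Finset.mem_filter.mp hxmem).2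
      by_cases hx : x = x₀
      · rw [hx]; exact Finset.mem_insert_self _ _
      · by_cases hodd : Odd (T.dist x₀ x)
        · by_cases h1 : T.dist x₀ x = 1
          · obtain ⟨hp1a, hp1d⟩ := hpar x (hne0 x hx)
            have hpx0 : par x = x₀ := (D0 _).1 (by omega)
            rw [hpx0] at hp1a
            exact Finset.mem_insert_of_mem ((SimpleGraph.mem_neighborFinset _ _ _).mpr hp1a)
          · exfalso
            have hgpv := (hgp x hodd).2.2 h1
            have hav : (gp x).val = x₀ := by
              rw [← hancO x hx hodd, hax, ht]
            rw [hav] at hgpv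
            have h0 : T.dist x₀ x₀ = 0 := (D0 x₀).2 rfl
            rw [Nat.odd_iff] at hodd
            omega
        · exfalso
          have hoddp := hoddpar x hx hodd
          have hav : (sel (par x)).val = x₀ := by
            rw [← hancE x hx hodd, hax, ht]
          rw [hsel (par x) hoddp] at hav
          have h0 : T.dist x₀ (par x) = 0 := (D0 _).2 hav
          rw [h0] at hoddp
          simp [Nat.odd_iff] at hoddp
    · have hcard2 : ((T.neighborFinset t.val).biUnion (fun y => T.neighborFinset y)).card
          ≤ d * d := by
        refine le_trans Finset.card_biUnion_le ?_
        refine le_trans (Finset.sum_le_card_nsmul _ _ d (fun y _ => hdeg y)) ?_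
        rw [smul_eq_mul]
        exact Nat.mul_le_mul_right d (hdeg t.val)
      have hsubU : Finset.univ.filter (fun x : αT => anchor x = t) ⊆
          (T.neighborFinset t.val) ∪
            ((T.neighborFinset t.val).biUnion (fun y => T.neighborFinset y)) := by
        intro x hxmem
        have hax : anchor x = t := (Finset.mem_filter.mp hxmem).2
        by_cases hx : x = x₀
        · exfalso
          apply ht
          rw [← hax, hx, hanc0 x₀ rfl, hroot]
        · by_cases hodd : Odd (T.dist x₀ x)
          · obtain ⟨hp1a, hp1d⟩ := hpar x (hne0 x hx)
            by_cases h1 : T.dist x₀ x = 1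
            · exfalso
              apply ht
              rw [← hax, hancO x hx hodd]
              exact (hgp x hodd).2.1 h1
            · have hgpv := (hgp x hodd).2.2 h1
              have htv : t.val = par (par x) := by
                rw [← hax, hancO x hx hodd]
                exact hgpv.1
              have hl3 : 3 ≤ T.dist x₀ x := by
                have := Nat.odd_iff.mp hodd
                omega
              have hp1ne : par x ≠ x₀ := by
                intro he
                have h0 : T.dist x₀ (par x) = 0 := (D0 _).2 he
                omega
              obtain ⟨hp2a, hp2d⟩ := hpar (par x) (hne0 _ hp1ne)
              refine Finset.mem_union_right _ (Finset.mem_biUnion.mpr ⟨par x, ?_, ?_⟩)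
              · rw [htv]
                exact (SimpleGraph.mem_neighborFinset _ _ _).mpr hp2a
              · exact (SimpleGraph.mem_neighborFinset _ _ _).mpr hp1a
          · have htv : t.val = par x := by
              rw [← hax, hancE x hx hodd]
              exact hsel (par x) (hoddpar x hx hodd)
            obtain ⟨hp1a, hp1d⟩ := hpar x (hne0 x hx)
            refine Finset.mem_union_left _ ?_
            rw [htv]
            exact (SimpleGraph.mem_neighborFinset _ _ _).mpr hp1a
      refine le_trans (Finset.card_le_card hsubU) (le_trans
        (Finset.card_union_le _ _) ?_)
      have h1 := hdeg t.val
      omega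
  -- choose the disjoint blocks
  have hexb : ∀ i : Fin m, ∃ b : αT → Finset γ,
      ∀ x ∈ Finset.univ.filter (fun x : αT => g (anchor x) = i),
        b x ⊆ host x ∧ (b x).card = k ∧
        ∀ y ∈ Finset.univ.filter (fun x : αT => g (anchor x) = i),
          y ≠ x → Disjoint (b x) (b y) := by
    intro i
    apply auxS7_exists_blocks k host
    intro x hx
    have hxi : g (anchor x) = i := (Finset.mem_filter.mp hx).2
    have hsub2 : Finset.univ.filter (fun y : αT => g (anchor y) = i) ⊆
        Finset.univ.filter (fun y : αT => anchor y = anchor x) := by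
      intro y hy
      refine Finset.mem_filter.mpr ⟨Finset.mem_univ y, ?_⟩
      exact g.injective (((Finset.mem_filter.mp hy).2).trans hxi.symm)
    have hcb := le_trans (Finset.card_le_card hsub2) (hfib (anchor x))
    exact le_trans (Nat.mul_le_mul_right k hcb) (hhostcard x)
  choose bfun hbfun using hexb
  obtain ⟨bb, hbbdef⟩ : ∃ bb : αT → Finset γ, ∀ x, bb x = bfun (g (anchor x)) x :=
    ⟨_, fun _ => rfl⟩
  have hmemself : ∀ x : αT,
      x ∈ Finset.univ.filter (fun y : αT => g (anchor y) = g (anchor x)) :=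
    fun x => Finset.mem_filter.mpr ⟨Finset.mem_univ x, rfl⟩
  have hbsub : ∀ x : αT, bb x ⊆ host x := by
    intro x
    rw [hbbdef x]
    exact (hbfun (g (anchor x)) x (hmemself x)).1
  have hbk : ∀ x : αT, (bb x).card = k := by
    intro x
    rw [hbbdef x]
    exact (hbfun (g (anchor x)) x (hmemself x)).2.1
  have hdisj : ∀ x y : αT, x ≠ y → Disjoint (bb x) (bb y) := by
    intro x y hne
    by_cases hp : g (anchor x) = g (anchor y)
    · have hmemy : y ∈ Finset.univ.filter (fun z : αT => g (anchor z) = g (anchor x)) :=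
        Finset.mem_filter.mpr ⟨Finset.mem_univ y, hp.symm⟩
      have h := (hbfun (g (anchor x)) x (hmemself x)).2.2 y hmemy (Ne.symm hne)
      rw [hbbdef x, hbbdef y, ← hp]
      exact h
    · rw [Finset.disjoint_left]
      intro e hex hey
      have h1 : e ∈ V (g (anchor x)) := hhostV x (hbsub x hex)
      have h2 : e ∈ V (g (anchor y)) := hhostV y (hbsub y hey)
      obtain ⟨i, _, hiu⟩ := hpart e
      exact hp ((hiu _ h1).trans (hiu _ h2).symm)
  -- the embedding map
  obtain ⟨femb, hfembdef⟩ : ∃ f : αT × Fin k → γ, ∀ p : αT × Fin k,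
      f p = ((bb p.1).equivFin.symm (Fin.cast (hbk p.1).symm p.2) : γ) :=
    ⟨_, fun _ => rfl⟩
  have hfmem : ∀ p : αT × Fin k, femb p ∈ bb p.1 := by
    intro p
    rw [hfembdef]
    exact Finset.coe_mem _
  have hinj : Function.Injective femb := by
    intro p q h
    by_cases hpq : p.1 = q.1
    · obtain ⟨x, j⟩ := p
      obtain ⟨y, l⟩ := q
      simp only at hpq
      subst hpq
      rw [hfembdef (x, j), hfembdef (x, l)] at h
      simp only at h
      have h2 := Subtype.coe_injective h
      have h3 := (bb x).equivFin.symm.injective h2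
      have h4 : (j : ℕ) = (l : ℕ) := by
        simpa using congrArg Fin.val h3
      exact Prod.ext rfl (Fin.ext h4)
    · exact absurd (hfmem q) (Finset.disjoint_left.mp (hdisj p.1 q.1 hpq) (h ▸ hfmem p))
  -- blue edges inside a part
  have hsamepart : ∀ x y : αT, g (anchor x) = g (anchor y) → ∀ a ∈ bb x, ∀ c ∈ bb y,
      a ≠ c → G.Adj a c ∧ ψ s(a, c) = false := by
    intro x y hp a ha c hc hne
    exact hblue (g (anchor x)) a (hhostV x (hbsub x ha)) c
      (by rw [hp]; exact hhostV y (hbsub y hc)) hne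
  -- blue edges along tree edges
  have hedge : ∀ x y : αT, T.Adj y x → T.dist x₀ y + 1 = T.dist x₀ x →
      ∀ a ∈ bb x, ∀ c ∈ bb y, G.Adj a c ∧ ψ s(a, c) = false := by
    intro x y hadj hdd a ha c hc
    have hy : y = par x := hparU x y hadj hdd
    subst hy
    have hx0 : x ≠ x₀ := by
      intro he
      rw [(D0 x).2 he] at hdd
      omega
    have hxne : x ≠ par x := by
      intro he
      rw [← he] at hdd
      omega
    have hanex : a ≠ c := by
      intro he
      subst he
      exact Finset.disjoint_left.mp (hdisj x (par x) hxne) ha hc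
    by_cases hodd : Odd (T.dist x₀ x)
    · -- same part
      have hax : anchor x = gp x := hancO x hx0 hodd
      have hsame : g (anchor x) = g (anchor (par x)) := by
        by_cases h1 : T.dist x₀ x = 1
        · have hpx0 : par x = x₀ := (D0 _).1 (by omega)
          have h2 : anchor (par x) = root' := by rw [hpx0]; exact hanc0 x₀ rfl
          have h3 : gp x = root' := Subtype.ext (((hgp x hodd).2.1 h1).trans hroot.symm)
          rw [hax, h2, h3]
        · have hgpv := (hgp x hodd).2.2 h1
          have hl3 : 3 ≤ T.dist x₀ x := by
            have := Nat.odd_iff.mp hodd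
            omega
          have hpxne : par x ≠ x₀ := by
            intro he
            have h0 : T.dist x₀ (par x) = 0 := (D0 _).2 he
            omega
          have hnoddp : ¬ Odd (T.dist x₀ (par x)) := by
            intro ho
            rw [Nat.odd_iff] at ho hodd
            omega
          have h2 : anchor (par x) = sel (par (par x)) := hancE (par x) hpxne hnoddp
          have hodd2 : Odd (T.dist x₀ (par (par x))) := by
            have hq := hgpv.2
            rw [hgpv.1] at hq
            rw [Nat.odd_iff] at hodd ⊢
            omega
          have h3 : (sel (par (par x))).val = par (par x) := hsel _ hodd2
          rw [hax, h2]
          exact congrArg g (Subtype.ext (hgpv.1.trans h3.symm))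
      exact hsamepart x (par x) hsame a ha c hc hanex
    · -- cross part: use the blue K_{s,s}
      have hoddp : Odd (T.dist x₀ (par x)) := hoddpar x hx0 hodd
      have hpxne : par x ≠ x₀ := by
        intro he
        have h0 : T.dist x₀ (par x) = 0 := (D0 _).2 he
        rw [h0] at hoddp
        simp [Nat.odd_iff] at hoddp
      have hhx : host x = A (par x) := hhE x hx0 hodd
      have hhy : host (par x) = B (par x) := hhO (par x) hpxne hoddp
      refine (hAB (par x) hoddp).2.2.2.2 a ?_ c ?_
      · have h := hbsub x ha
        rwa [hhx] at h
      · have h := hbsub (par x) hc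
        rwa [hhy] at h
  -- adjacent tree vertices have distance to root differing by one
  have hadjcases : ∀ x y : αT, T.Adj x y →
      T.dist x₀ x + 1 = T.dist x₀ y ∨ T.dist x₀ y + 1 = T.dist x₀ x := by
    intro x y h
    have h1 : T.dist x₀ y ≤ T.dist x₀ x + T.dist x y := conn.dist_triangle
    have h2 : T.dist x₀ x ≤ T.dist x₀ y + T.dist y x := conn.dist_triangle
    have h3 : T.dist x y ≤ 1 := dist_le (Walk.cons h Walk.nil)
    have h4 : T.dist y x ≤ 1 := dist_le (Walk.cons h.symm Walk.nil)
    have h5 := auxS7_adj_dist_ne hT x₀ h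
    omega
  -- conclusion
  refine ⟨⟨femb, hinj⟩, ?_⟩
  rintro ⟨x, j⟩ ⟨y, l⟩ hadj
  have hadj' : (x = y ∧ (⊤ : SimpleGraph (Fin k)).Adj j l) ∨ (T.Adj x y ∧ j = l) ∨
      (T.Adj x y ∧ (⊤ : SimpleGraph (Fin k)).Adj j l) := hadj
  have hcases : (x = y ∧ j ≠ l) ∨ T.Adj x y := by
    rcases hadj' with ⟨h1, h2⟩ | ⟨h1, _⟩ | ⟨h1, _⟩
    · exact Or.inl ⟨h1, (SimpleGraph.top_adj j l).mp h2⟩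
    · exact Or.inr h1
    · exact Or.inr h1
  rcases hcases with ⟨hxy, hjl⟩ | hTadj
  · subst hxy
    have hne : femb (x, j) ≠ femb (x, l) := by
      intro he
      exact hjl (congrArg Prod.snd (hinj he))
    exact hsamepart x x rfl _ (hfmem (x, j)) _ (hfmem (x, l)) hne
  · rcases hadjcases x y hTadj with hdd | hdd
    · have h := hedge y x hTadj hdd (femb (y, l)) (hfmem (y, l)) (femb (x, j)) (hfmem (x, j))
      refine ⟨h.1.symm, ?_⟩
      rw [Sym2.eq_swap]
      exact h.2
    · exact hedge x y hTadj.symm hdd (femb (x, j)) (hfmem (x, j)) (femb (y, l)) (hfmem (y, l))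
end

section
/- Let k ≥ 1 be an integer and let G be a (2k − 1)-degenerate graph. Then the vertex set of G can be partitioned into two sets V_r and V_b such that both induced subgraphs G[V_r] and G[V_b] are (k − 1)-degenerate. -/
open SimpleGraph

/-- Let `k ≥ 1` and let `G` be a `(2k - 1)`-degenerate graph. Then the
vertex set of `G` can be partitioned into two sets `V_r` and `V_b` (a set and its
complement) such that both induced subgraphs are `(k - 1)`-degenerate. -/
theorem statement15 {α : Type} [Fintype α] (k : ℕ) (hk : 1 ≤ k)
    (G : SimpleGraph α) (hG : Degenerate (2 * k - 1) G) :
    ∃ A : Set α, Degenerate (k - 1) (SimpleGraph.induce A G) ∧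
      Degenerate (k - 1) (SimpleGraph.induce Aᶜ G) := by

  classical
  -- `Good X` : every nonempty subset of `X` has a vertex with ≤ k-1 neighbours inside it
  have key : ∀ n : ℕ, ∀ s : Set α, s.ncard ≤ n →
      ∃ A ⊆ s,
        (∀ t ⊆ A, t.Nonempty → ∃ v ∈ t, (G.neighborSet v ∩ t).ncard ≤ k - 1) ∧
        (∀ t ⊆ s \ A, t.Nonempty → ∃ v ∈ t, (G.neighborSet v ∩ t).ncard ≤ k - 1) := by
    intro n
    induction n with
    | zero =>
      intro s hs
      have hse : s = ∅ := by
        have := (Set.ncard_eq_zero s.toFinite).mp (Nat.le_zero.mp hs)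
        exact this
      refine ⟨∅, by simp, ?_, ?_⟩ <;>
      · intro t ht hne
        exfalso
        rcases hne with ⟨x, hx⟩
        have := ht hx
        simp [hse] at this
    | succ n ih =>
      intro s hs
      rcases Set.eq_empty_or_nonempty s with hse | hne
      · refine ⟨∅, by simp, ?_, ?_⟩ <;>
        · intro t ht htne
          exfalso
          rcases htne with ⟨x, hx⟩
          have := ht hx
          simp [hse] at this
      · obtain ⟨v, hv, hdeg⟩ := hG s hne
        set s' := s \ {v} with hs'
        have hcard : s'.ncard ≤ n := by
          have h1 : s'.ncard = s.ncard - 1 := by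
            rw [hs', Set.ncard_diff_singleton_of_mem hv]
          have h2 : 1 ≤ s.ncard := by
            have := Set.ncard_pos s.toFinite |>.mpr hne
            omega
          omega
        obtain ⟨A, hAs, hGoodA, hGoodB⟩ := ih s' hcard
        have hvA : v ∉ A := fun h => (hAs h).2 rfl
        have hvB : v ∉ s' \ A := fun h => h.1.2 rfl
        -- the two back-neighbourhoods are disjoint and together lie in N(v) ∩ s
        have hsplit : (G.neighborSet v ∩ A).ncard + (G.neighborSet v ∩ (s' \ A)).ncard
            ≤ 2 * k - 1 := by
          have hdisj : Disjoint (G.neighborSet v ∩ A) (G.neighborSet v ∩ (s' \ A)) := by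
            refine Set.disjoint_left.mpr ?_
            rintro x ⟨_, hxA⟩ ⟨_, hxB⟩
            exact hxB.2 hxA
          have hunion : (G.neighborSet v ∩ A) ∪ (G.neighborSet v ∩ (s' \ A))
              ⊆ G.neighborSet v ∩ s := by
            rintro x (⟨h1, h2⟩ | ⟨h1, h2⟩)
            · exact ⟨h1, (hAs h2).1⟩
            · exact ⟨h1, h2.1.1⟩
          calc (G.neighborSet v ∩ A).ncard + (G.neighborSet v ∩ (s' \ A)).ncard
              = ((G.neighborSet v ∩ A) ∪ (G.neighborSet v ∩ (s' \ A))).ncard := by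
                rw [Set.ncard_union_eq hdisj (Set.toFinite _) (Set.toFinite _)]
            _ ≤ (G.neighborSet v ∩ s).ncard := Set.ncard_le_ncard hunion (Set.toFinite _)
            _ ≤ 2 * k - 1 := hdeg
        -- inserting v into a "good" set B with few v-neighbours keeps it good
        have hins : ∀ B : Set α,
            (∀ t ⊆ B, t.Nonempty → ∃ u ∈ t, (G.neighborSet u ∩ t).ncard ≤ k - 1) →
            (G.neighborSet v ∩ B).ncard ≤ k - 1 →
            (∀ t ⊆ insert v B, t.Nonempty → ∃ u ∈ t, (G.neighborSet u ∩ t).ncard ≤ k - 1) := by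
          intro B hGood hfew t ht htne
          by_cases hvt : v ∈ t
          · refine ⟨v, hvt, ?_⟩
            refine le_trans (Set.ncard_le_ncard ?_ (Set.toFinite _)) hfew
            rintro x ⟨hx1, hx2⟩
            refine ⟨hx1, ?_⟩
            rcases ht hx2 with h | h
            · exact absurd (h ▸ hx1) (G.irrefl)
            · exact h
          · refine hGood t ?_ htne
            intro x hx
            rcases ht hx with h | h
            · exact absurd (h ▸ hx) hvt
            · exact h
        by_cases hcase : (G.neighborSet v ∩ A).ncard ≤ k - 1
        · refine ⟨insert v A, ?_, hins A hGoodA hcase, ?_⟩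
          · exact Set.insert_subset hv (hAs.trans Set.diff_subset)
          · have : s \ insert v A = s' \ A := by
              rw [hs', Set.diff_diff, Set.insert_eq, Set.union_comm]
            rw [this]; exact hGoodB
        · have hcase2 : (G.neighborSet v ∩ (s' \ A)).ncard ≤ k - 1 := by omega
          refine ⟨A, hAs.trans Set.diff_subset, hGoodA, ?_⟩
          have : s \ A = insert v (s' \ A) := by
            ext x
            simp only [hs', Set.mem_diff, Set.mem_insert_iff, Set.mem_singleton_iff]
            constructor
            · rintro ⟨hxs, hxA⟩
              by_cases hxv : x = v
              · exact Or.inl hxv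
              · exact Or.inr ⟨⟨hxs, hxv⟩, hxA⟩
            · rintro (rfl | ⟨⟨hxs, _⟩, hxA⟩)
              · exact ⟨hv, hvA⟩
              · exact ⟨hxs, hxA⟩
          rw [this]; exact hins (s' \ A) hGoodB hcase2
  obtain ⟨A, -, hGoodA, hGoodB⟩ := key (Set.univ.ncard) Set.univ le_rfl
  have hBA : Set.univ \ A = Aᶜ := by simp [Set.compl_eq_univ_diff]
  rw [hBA] at hGoodB
  -- translate "good" into degeneracy of the induced subgraph
  have translate : ∀ (X : Set α),
      (∀ t ⊆ X, t.Nonempty → ∃ v ∈ t, (G.neighborSet v ∩ t).ncard ≤ k - 1) →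
      Degenerate (k - 1) (SimpleGraph.induce X G) := by
    intro X hX t htne
    have himne : (Subtype.val '' t : Set α).Nonempty := htne.image _
    have hsub : (Subtype.val '' t : Set α) ⊆ X := by
      rintro x ⟨y, _, rfl⟩; exact y.2
    obtain ⟨v, hvmem, hv⟩ := hX _ hsub himne
    obtain ⟨v', hv't, rfl⟩ := hvmem
    refine ⟨v', hv't, ?_⟩
    have hinj : Set.InjOn (Subtype.val : X → α)
        ((SimpleGraph.induce X G).neighborSet v' ∩ t) :=
      Subtype.val_injective.injOn
    have himg : Subtype.val '' ((SimpleGraph.induce X G).neighborSet v' ∩ t)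
        ⊆ G.neighborSet ↑v' ∩ (Subtype.val '' t) := by
      rintro x ⟨y, ⟨hadj, hyt⟩, rfl⟩
      exact ⟨hadj, ⟨y, hyt, rfl⟩⟩
    calc ((SimpleGraph.induce X G).neighborSet v' ∩ t).ncard
        = (Subtype.val '' ((SimpleGraph.induce X G).neighborSet v' ∩ t)).ncard :=
          (Set.ncard_image_of_injOn hinj).symm
      _ ≤ (G.neighborSet ↑v' ∩ (Subtype.val '' t)).ncard :=
          Set.ncard_le_ncard himg (Set.toFinite _)
      _ ≤ k - 1 := hv
  exact ⟨A, translate A hGoodA, translate Aᶜ hGoodB⟩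
end
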